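/- arXiv:2301.08269 — 6 statements merged into one kernel-verified Lean document; each statement's English description precedes it below -/
import Mathlib

section
/- Let θ = m/(ε·**Z**) for ε > 0, m ∈ ℕ with m ≥ 1, and **Z** > 0. If a path p satisfies ζ(p) ≤ **Z**, then its quantized length satisfies ζ^θ(p) ≤ ⌊θ·**Z**⌋ + m. Conversely, if ζ^θ(p) ≤ ⌊θ·**Z**⌋ + m, then ζ(p) ≤ (1+ε)·**Z**. -/
/-- Correctness of the approximate test quantization: with `θ = m/(ε·Z)`,
a path with real length at most `Z` has quantized length at most `⌊θZ⌋ + m`;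
conversely a path with quantized length at most `⌊θZ⌋ + m` has real length
at most `(1+ε)·Z`. -/
theorem approximate_test_quantization {ι : Type*} (p : Finset ι) (ζ : ι → ℝ)
    (hζ : ∀ i ∈ p, 0 < ζ i) (m : ℕ) (hm1 : 1 ≤ m) (hcard : p.card ≤ m)
    (ε Z : ℝ) (hε : 0 < ε) (hZ : 0 < Z) (θ : ℝ) (hθ : θ = m / (ε * Z)) :
    ((∑ i ∈ p, ζ i ≤ Z) →
      (∑ i ∈ p, (⌊θ * ζ i⌋ + 1) : ℤ) ≤ ⌊θ * Z⌋ + (m : ℤ)) ∧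
    (((∑ i ∈ p, (⌊θ * ζ i⌋ + 1) : ℤ) ≤ ⌊θ * Z⌋ + (m : ℤ)) →
      ∑ i ∈ p, ζ i ≤ (1 + ε) * Z) := by
  have hm0 : (0:ℝ) < m := by exact_mod_cast Nat.lt_of_lt_of_le Nat.zero_lt_one hm1
  have hθ0 : 0 < θ := by rw [hθ]; positivity
  have hθZ : θ * (ε * Z) = m := by
    rw [hθ]; field_simp
  constructor
  · intro h
    have h1 : (∑ i ∈ p, (⌊θ * ζ i⌋:ℤ)) ≤ ⌊θ * Z⌋ := by
      rw [Int.le_floor]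
      push_cast
      calc (∑ i ∈ p, (⌊θ * ζ i⌋:ℝ)) ≤ ∑ i ∈ p, θ * ζ i :=
            Finset.sum_le_sum fun i _ => Int.floor_le _
        _ = θ * ∑ i ∈ p, ζ i := by rw [Finset.mul_sum]
        _ ≤ θ * Z := mul_le_mul_of_nonneg_left h hθ0.le
    rw [Finset.sum_add_distrib, Finset.sum_const, nsmul_eq_mul, mul_one]
    have : (p.card : ℤ) ≤ (m : ℤ) := by exact_mod_cast hcard
    linarith
  · intro h
    have h2 : θ * ∑ i ∈ p, ζ i ≤ ∑ i ∈ p, ((⌊θ * ζ i⌋:ℝ) + 1) := by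
      rw [Finset.mul_sum]
      exact Finset.sum_le_sum fun i _ => (Int.lt_floor_add_one _).le
    have h3 : (∑ i ∈ p, ((⌊θ * ζ i⌋:ℝ) + 1)) ≤ (⌊θ * Z⌋:ℝ) + m := by
      exact_mod_cast h
    have h4 : (⌊θ * Z⌋:ℝ) ≤ θ * Z := Int.floor_le _
    have h5 : θ * ∑ i ∈ p, ζ i ≤ θ * Z + m := by linarith
    have h6 : θ * ∑ i ∈ p, ζ i ≤ θ * Z + θ * (ε * Z) := by rw [hθZ]; exact h5
    have := le_of_mul_le_mul_left (by linarith [h6] : θ * ∑ i ∈ p, ζ i ≤ θ * ((1+ε)*Z)) hθ0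
    linarith
end

section
/- Suppose the approximate test TEST(**Z**, ε) returns true iff there exists a feasible solution all of whose paths have quantized length (with θ = m/(ε**Z**)) at most ⌊θ**Z**⌋ + m. Let **Z*** be the minimum over feasible solutions of the maximum original path length. Then: TEST(**Z**, ε) = true implies **Z*** ≤ (1+ε)·**Z**, and TEST(**Z**, ε) = false implies **Z*** > **Z**. -/
/-- Correctness of the approximate testing procedure TEST(Z, ε): solutions are
finite sets of paths (finite sets of elements with positive lengths, at most
`m` elements each). `Z* = sInf` over solutions of the max real path length.
If TEST returns true then `Z* ≤ (1+ε)Z`; if it returns false then `Z* > Z`. -/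
theorem approximate_test_correct {ι : Type*} (ζ : ι → ℝ) (hζ : ∀ i, 0 < ζ i)
    (m : ℕ) (hm : 1 ≤ m)
    (S : Set (Finset (Finset ι))) (hS : S.Nonempty)
    (hne : ∀ sol ∈ S, sol.Nonempty)
    (hcard : ∀ sol ∈ S, ∀ p ∈ sol, p.card ≤ m)
    (Z ε : ℝ) (hZ : 0 < Z) (hε : 0 < ε) (θ : ℝ) (hθ : θ = m / (ε * Z)) :
    ((∃ sol ∈ S, ∀ p ∈ sol, (∑ i ∈ p, (⌊θ * ζ i⌋ + 1) : ℤ) ≤ ⌊θ * Z⌋ + (m : ℤ)) →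
      sInf {M : ℝ | ∃ sol ∈ S, ∀ p ∈ sol, ∑ i ∈ p, ζ i ≤ M} ≤ (1 + ε) * Z) ∧
    ((¬ ∃ sol ∈ S, ∀ p ∈ sol, (∑ i ∈ p, (⌊θ * ζ i⌋ + 1) : ℤ) ≤ ⌊θ * Z⌋ + (m : ℤ)) →
      Z < sInf {M : ℝ | ∃ sol ∈ S, ∀ p ∈ sol, ∑ i ∈ p, ζ i ≤ M}) := by
  have hm0 : (0 : ℝ) < m := by exact_mod_cast Nat.lt_of_lt_of_le Nat.zero_lt_one hm
  have hθ0 : 0 < θ := by rw [hθ]; positivity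
  have hmθ : (m : ℝ) = θ * (ε * Z) := by
    rw [hθ]; field_simp
  set T := {M : ℝ | ∃ sol ∈ S, ∀ p ∈ sol, ∑ i ∈ p, ζ i ≤ M} with hT
  have hTne : T.Nonempty := by
    obtain ⟨sol, hsol⟩ := hS
    exact ⟨sol.sup' (hne sol hsol) (fun p => ∑ i ∈ p, ζ i), sol, hsol,
      fun p hp => Finset.le_sup' (fun q => ∑ i ∈ q, ζ i) hp⟩
  have hTbdd : BddBelow T := by
    refine ⟨0, ?_⟩
    rintro M ⟨sol, hsol, hM⟩
    obtain ⟨p, hp⟩ := hne sol hsol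
    exact le_trans (Finset.sum_nonneg fun i _ => (hζ i).le) (hM p hp)
  constructor
  · rintro ⟨sol, hsol, htest⟩
    apply csInf_le hTbdd
    refine ⟨sol, hsol, fun p hp => ?_⟩
    have h1 : θ * (∑ i ∈ p, ζ i) ≤ ((∑ i ∈ p, (⌊θ * ζ i⌋ + 1) : ℤ) : ℝ) := by
      push_cast
      rw [Finset.mul_sum]
      exact Finset.sum_le_sum fun i _ => (Int.lt_floor_add_one (θ * ζ i)).le
    have h2 : ((∑ i ∈ p, (⌊θ * ζ i⌋ + 1) : ℤ) : ℝ) ≤ (⌊θ * Z⌋ : ℝ) + m := by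
      have := htest p hp
      exact_mod_cast this
    have h3 : (⌊θ * Z⌋ : ℝ) + m ≤ θ * Z + θ * (ε * Z) := by
      rw [hmθ]
      exact add_le_add_left (Int.floor_le _) _
    have h4 : θ * (∑ i ∈ p, ζ i) ≤ θ * ((1 + ε) * Z) := by
      calc θ * (∑ i ∈ p, ζ i) ≤ θ * Z + θ * (ε * Z) := le_trans h1 (le_trans h2 h3)
        _ = θ * ((1 + ε) * Z) := by ring
    exact le_of_mul_le_mul_left h4 hθ0
  · intro hfalse
    set b : ℝ := (Z + ((⌊θ * Z⌋ : ℝ) + 1) / θ) / 2 with hb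
    have hZb : Z < b := by
      have : θ * Z < (⌊θ * Z⌋ : ℝ) + 1 := Int.lt_floor_add_one _
      have : Z < ((⌊θ * Z⌋ : ℝ) + 1) / θ := (lt_div_iff₀ hθ0).mpr (by linarith [this])
      rw [hb]; linarith
    have hlb : ∀ M ∈ T, b ≤ M := by
      rintro M ⟨sol, hsol, hM⟩
      by_contra hlt
      push_neg at hlt
      apply hfalse
      refine ⟨sol, hsol, fun p hp => ?_⟩
      have hMb : θ * M < (⌊θ * Z⌋ : ℝ) + 1 := by
        have hM2 : M < ((⌊θ * Z⌋ : ℝ) + 1) / θ := by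
          have : θ * Z < (⌊θ * Z⌋ : ℝ) + 1 := Int.lt_floor_add_one _
          have hZlt : Z < ((⌊θ * Z⌋ : ℝ) + 1) / θ := (lt_div_iff₀ hθ0).mpr (by linarith)
          calc M < b := hlt
            _ < ((⌊θ * Z⌋ : ℝ) + 1) / θ := by rw [hb]; linarith
        calc θ * M = M * θ := mul_comm _ _
          _ < (⌊θ * Z⌋ : ℝ) + 1 := (lt_div_iff₀ hθ0).mp hM2
      have hfloorM : ⌊θ * M⌋ ≤ ⌊θ * Z⌋ := by
        have : ⌊θ * M⌋ < ⌊θ * Z⌋ + 1 := Int.floor_lt.mpr (by push_cast; linarith)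
        omega
      have hsum : (∑ i ∈ p, ⌊θ * ζ i⌋ : ℤ) ≤ ⌊θ * M⌋ := by
        apply Int.le_floor.mpr
        push_cast
        calc (∑ i ∈ p, (⌊θ * ζ i⌋ : ℝ)) ≤ ∑ i ∈ p, θ * ζ i :=
              Finset.sum_le_sum fun i _ => Int.floor_le _
          _ = θ * ∑ i ∈ p, ζ i := (Finset.mul_sum _ _ _).symm
          _ ≤ θ * M := mul_le_mul_of_nonneg_left (hM p hp) hθ0.le
      have hcardp : (p.card : ℤ) ≤ m := by exact_mod_cast hcard sol hsol p hp
      calc (∑ i ∈ p, (⌊θ * ζ i⌋ + 1) : ℤ) = (∑ i ∈ p, ⌊θ * ζ i⌋) + p.card := by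
            rw [Finset.sum_add_distrib]; simp
        _ ≤ ⌊θ * M⌋ + m := add_le_add hsum hcardp
        _ ≤ ⌊θ * Z⌋ + m := add_le_add_left hfloorM _
    exact lt_of_lt_of_le hZb (le_csInf hTne hlb)
end

section
/- Let sorted descending values ζ_{[1]} ≥ ζ_{[2]} ≥ ... be the element lengths of a network with |N| nodes, and suppose index i is such that the network restricted to elements of length ≤ ζ_{[i−1]} admits a feasible solution (with every path using at most 2|N|−3 elements), but the restriction to elements of length ≤ ζ_{[i]} does not. Then the optimal minimum longest-path length **Z*** satisfies ζ_{[i−1]} ≤ **Z*** ≤ (2|N|−3)·ζ_{[i−1]}. -/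
/-- Sorting-and-trimming bound: if the network restricted to elements of length
at most `a = ζ_{[i−1]}` admits a feasible solution (paths of at most `2n−3`
positive-length elements), while every feasible solution must use some element
of length at least `a`, then the optimal minimum longest-path length `Z*`
satisfies `a ≤ Z* ≤ (2n−3)·a`. -/
theorem sorting_trimming_bounds {ι : Type*} (ζ : ι → ℝ) (hζ : ∀ i, 0 < ζ i)
    (n : ℕ) (hn : 2 ≤ 2 * n - 3)
    (S : Set (Finset (Finset ι))) (hS : S.Nonempty)
    (hcard : ∀ sol ∈ S, ∀ p ∈ sol, p.card ≤ 2 * n - 3)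
    (a : ℝ) (ha : 0 < a)
    (hfeas : ∃ sol ∈ S, ∀ p ∈ sol, ∀ i ∈ p, ζ i ≤ a)
    (hcrit : ∀ sol ∈ S, ∃ p ∈ sol, ∃ i ∈ p, a ≤ ζ i) :
    a ≤ sInf {M : ℝ | ∃ sol ∈ S, ∀ p ∈ sol, ∑ i ∈ p, ζ i ≤ M} ∧
    sInf {M : ℝ | ∃ sol ∈ S, ∀ p ∈ sol, ∑ i ∈ p, ζ i ≤ M} ≤ ((2 * n - 3 : ℕ) : ℝ) * a := by
  set T := {M : ℝ | ∃ sol ∈ S, ∀ p ∈ sol, ∑ i ∈ p, ζ i ≤ M} with hT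
  have hlb : ∀ M ∈ T, a ≤ M := by
    rintro M ⟨sol, hsol, hM⟩
    obtain ⟨p, hp, i, hi, hai⟩ := hcrit sol hsol
    calc a ≤ ζ i := hai
      _ ≤ ∑ j ∈ p, ζ j := Finset.single_le_sum (fun j _ => (hζ j).le) hi
      _ ≤ M := hM p hp
  have hmem : ((2*n-3:ℕ):ℝ) * a ∈ T := by
    obtain ⟨sol, hsol, hbd⟩ := hfeas
    refine ⟨sol, hsol, fun p hp => ?_⟩
    calc ∑ i ∈ p, ζ i ≤ ∑ i ∈ p, a := Finset.sum_le_sum (fun i hi => hbd p hp i hi)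
      _ = p.card * a := by rw [Finset.sum_const, nsmul_eq_mul]
      _ ≤ ((2*n-3:ℕ):ℝ) * a :=
          mul_le_mul_of_nonneg_right (by exact_mod_cast hcard sol hsol p hp) ha.le
  exact ⟨le_csInf ⟨_, hmem⟩ hlb, csInf_le ⟨a, hlb⟩ hmem⟩
end

section
/- With θ = m/(ε·LB) and LB ≤ **Z*** ≤ UB, the optimal quantized longest path length **Z**^θ of the quantized problem satisfies ⌊θ·LB⌋ ≤ **Z**^θ ≤ ⌊θ·UB⌋ + m. -/
/-- With `θ = m/(ε·LB)` and `LB ≤ Z* ≤ UB`, the optimal quantized longest path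
length `Z^θ` satisfies `⌊θ·LB⌋ ≤ Z^θ ≤ ⌊θ·UB⌋ + m`. Here `Z*` (resp. `Z^θ`) is
the infimum over feasible solutions of the maximum real (resp. quantized) path
length; quantized element lengths are `⌊θζᵢ⌋ + 1`. -/
theorem quantized_optimum_bounds {ι : Type*} (ζ : ι → ℝ) (hζ : ∀ i, 0 < ζ i)
    (m : ℕ) (hm : 1 ≤ m)
    (S : Set (Finset (Finset ι))) (hS : S.Nonempty)
    (hne : ∀ sol ∈ S, sol.Nonempty)
    (hcard : ∀ sol ∈ S, ∀ p ∈ sol, p.card ≤ m)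
    (LB UB ε : ℝ) (hLB : 0 < LB) (hε : 0 < ε)
    (θ : ℝ) (hθ : θ = m / (ε * LB))
    (hlow : LB ≤ sInf {M : ℝ | ∃ sol ∈ S, ∀ p ∈ sol, ∑ i ∈ p, ζ i ≤ M})
    (hup : sInf {M : ℝ | ∃ sol ∈ S, ∀ p ∈ sol, ∑ i ∈ p, ζ i ≤ M} ≤ UB) :
    (↑⌊θ * LB⌋ : ℝ) ≤
      sInf {M : ℝ | ∃ sol ∈ S, ∀ p ∈ sol, ((∑ i ∈ p, (⌊θ * ζ i⌋ + 1) : ℤ) : ℝ) ≤ M} ∧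
    sInf {M : ℝ | ∃ sol ∈ S, ∀ p ∈ sol, ((∑ i ∈ p, (⌊θ * ζ i⌋ + 1) : ℤ) : ℝ) ≤ M} ≤
      (↑⌊θ * UB⌋ : ℝ) + m := by
  have hmpos : (0 : ℝ) < m := by exact_mod_cast hm
  have hθpos : 0 < θ := by rw [hθ]; exact div_pos hmpos (mul_pos hε hLB)
  set A : Set ℝ := {M : ℝ | ∃ sol ∈ S, ∀ p ∈ sol, ∑ i ∈ p, ζ i ≤ M} with hA
  set Q : Set ℝ :=
    {M : ℝ | ∃ sol ∈ S, ∀ p ∈ sol, ((∑ i ∈ p, (⌊θ * ζ i⌋ + 1) : ℤ) : ℝ) ≤ M} with hQ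
  -- basic structure
  obtain ⟨sol₀, hsol₀⟩ := hS
  have hAne : A.Nonempty := by
    refine ⟨sol₀.sup' (hne sol₀ hsol₀) (fun p => ∑ i ∈ p, ζ i), sol₀, hsol₀, ?_⟩
    intro p hp
    exact Finset.le_sup' (fun p => ∑ i ∈ p, ζ i) hp
  have hQne : Q.Nonempty := by
    refine ⟨((sol₀.sup' (hne sol₀ hsol₀) (fun p => ∑ i ∈ p, (⌊θ * ζ i⌋ + 1)) : ℤ) : ℝ),
      sol₀, hsol₀, ?_⟩
    intro p hp
    exact_mod_cast Finset.le_sup' (fun p => ∑ i ∈ p, (⌊θ * ζ i⌋ + 1)) hp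
  have hAbdd : BddBelow A := by
    refine ⟨0, ?_⟩
    rintro M ⟨sol, hsolS, hM⟩
    obtain ⟨p, hp⟩ := hne sol hsolS
    exact le_trans (Finset.sum_nonneg fun i _ => (hζ i).le) (hM p hp)
  have hQbdd : BddBelow Q := by
    refine ⟨0, ?_⟩
    rintro M ⟨sol, hsolS, hM⟩
    obtain ⟨p, hp⟩ := hne sol hsolS
    refine le_trans ?_ (hM p hp)
    have : (0 : ℤ) ≤ ∑ i ∈ p, (⌊θ * ζ i⌋ + 1) := by
      apply Finset.sum_nonneg
      intro i _
      have : (0 : ℤ) ≤ ⌊θ * ζ i⌋ := Int.floor_nonneg.2 (mul_pos hθpos (hζ i)).le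
      omega
    exact_mod_cast this
  constructor
  · -- lower bound
    apply le_csInf hQne
    rintro b ⟨sol, hsolS, hb⟩
    -- the real optimum is ≤ the max real length of this solution
    have hsup : sol.sup' (hne sol hsolS) (fun p => ∑ i ∈ p, ζ i) ∈ A := by
      exact ⟨sol, hsolS, fun p hp => Finset.le_sup' (fun p => ∑ i ∈ p, ζ i) hp⟩
    have hZle : LB ≤ sol.sup' (hne sol hsolS) (fun p => ∑ i ∈ p, ζ i) :=
      le_trans hlow (csInf_le hAbdd hsup)
    obtain ⟨p, hp, hpeq⟩ := Finset.exists_mem_eq_sup' (hne sol hsolS)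
      (fun p => ∑ i ∈ p, ζ i)
    rw [hpeq] at hZle
    calc ((⌊θ * LB⌋ : ℤ) : ℝ) ≤ θ * LB := Int.floor_le _
      _ ≤ θ * ∑ i ∈ p, ζ i := by
          exact mul_le_mul_of_nonneg_left hZle hθpos.le
      _ = ∑ i ∈ p, θ * ζ i := Finset.mul_sum _ _ _
      _ ≤ ((∑ i ∈ p, (⌊θ * ζ i⌋ + 1) : ℤ) : ℝ) := by
          push_cast
          exact Finset.sum_le_sum fun i _ => (Int.lt_floor_add_one (θ * ζ i)).le
      _ ≤ b := hb p hp
  · -- upper bound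
    have hUBpos : 0 < UB := lt_of_lt_of_le hLB (le_trans hlow hup)
    have hδ : 0 < ((⌊θ * UB⌋ : ℝ) + 1) / θ - UB := by
      have h1 : θ * UB < (⌊θ * UB⌋ : ℝ) + 1 := Int.lt_floor_add_one _
      have : UB < ((⌊θ * UB⌋ : ℝ) + 1) / θ := by
        rw [lt_div_iff₀ hθpos]
        linarith [h1]
      linarith
    obtain ⟨M, hMA, hMlt⟩ := Real.lt_sInf_add_pos hAne hδ
    have hMup : θ * M < (⌊θ * UB⌋ : ℝ) + 1 := by
      have h2 : M < ((⌊θ * UB⌋ : ℝ) + 1) / θ := by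
        have := hup
        linarith
      calc θ * M < θ * (((⌊θ * UB⌋ : ℝ) + 1) / θ) := by
            exact mul_lt_mul_of_pos_left h2 hθpos
        _ = (⌊θ * UB⌋ : ℝ) + 1 := by field_simp
    obtain ⟨sol, hsolS, hM⟩ := hMA
    apply csInf_le hQbdd
    refine ⟨sol, hsolS, ?_⟩
    intro p hp
    have hsum : ((∑ i ∈ p, ⌊θ * ζ i⌋ : ℤ) : ℝ) ≤ θ * M := by
      calc ((∑ i ∈ p, ⌊θ * ζ i⌋ : ℤ) : ℝ) ≤ ∑ i ∈ p, θ * ζ i := by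
            push_cast
            exact Finset.sum_le_sum fun i _ => Int.floor_le _
        _ = θ * ∑ i ∈ p, ζ i := (Finset.mul_sum _ _ _).symm
        _ ≤ θ * M := mul_le_mul_of_nonneg_left (hM p hp) hθpos.le
    have hsumZ : (∑ i ∈ p, ⌊θ * ζ i⌋ : ℤ) ≤ ⌊θ * UB⌋ := by
      have h3 : ((∑ i ∈ p, ⌊θ * ζ i⌋ : ℤ) : ℝ) < (⌊θ * UB⌋ : ℝ) + 1 :=
        lt_of_le_of_lt hsum hMup
      exact_mod_cast Int.lt_add_one_iff.1 (by exact_mod_cast h3)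
    have hcardp : p.card ≤ m := hcard sol hsolS p hp
    have : (∑ i ∈ p, (⌊θ * ζ i⌋ + 1) : ℤ) ≤ ⌊θ * UB⌋ + m := by
      rw [Finset.sum_add_distrib, Finset.sum_const, nsmul_eq_mul, mul_one]
      omega
    calc ((∑ i ∈ p, (⌊θ * ζ i⌋ + 1) : ℤ) : ℝ) ≤ ((⌊θ * UB⌋ + m : ℤ) : ℝ) := by
          exact_mod_cast this
      _ = (⌊θ * UB⌋ : ℝ) + m := by push_cast; ring
end

section
/- With θ = m/(ε·LB) and LB ≤ **Z***, the optimal quantized longest path length satisfies **Z**^θ ≤ θ·(1+ε)·**Z***. -/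
/-- With `θ = m/(ε·LB)` and `LB ≤ Z*`, the optimal quantized longest path
length satisfies `Z^θ ≤ θ·(1+ε)·Z*`, where `Z*` (resp. `Z^θ`) is the infimum
over feasible solutions of the maximum real (resp. quantized) path length. -/
theorem quantized_optimum_approx {ι : Type*} (ζ : ι → ℝ) (hζ : ∀ i, 0 < ζ i)
    (m : ℕ) (hm : 1 ≤ m)
    (S : Set (Finset (Finset ι))) (hS : S.Nonempty)
    (hne : ∀ sol ∈ S, sol.Nonempty)
    (hcard : ∀ sol ∈ S, ∀ p ∈ sol, p.card ≤ m)
    (LB ε : ℝ) (hLB : 0 < LB) (hε : 0 < ε)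
    (θ : ℝ) (hθ : θ = m / (ε * LB))
    (hlow : LB ≤ sInf {M : ℝ | ∃ sol ∈ S, ∀ p ∈ sol, ∑ i ∈ p, ζ i ≤ M}) :
    sInf {M : ℝ | ∃ sol ∈ S, ∀ p ∈ sol, ((∑ i ∈ p, (⌊θ * ζ i⌋ + 1) : ℤ) : ℝ) ≤ M} ≤
      θ * (1 + ε) * sInf {M : ℝ | ∃ sol ∈ S, ∀ p ∈ sol, ∑ i ∈ p, ζ i ≤ M} := by
  set A := {M : ℝ | ∃ sol ∈ S, ∀ p ∈ sol, ∑ i ∈ p, ζ i ≤ M} with hA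
  set B := {M : ℝ | ∃ sol ∈ S, ∀ p ∈ sol, ((∑ i ∈ p, (⌊θ * ζ i⌋ + 1) : ℤ) : ℝ) ≤ M}
    with hB
  have hmpos : (0:ℝ) < m := by exact_mod_cast hm
  have hθpos : 0 < θ := by rw [hθ]; positivity
  have hAne : A.Nonempty := by
    obtain ⟨sol, hsol⟩ := hS
    exact ⟨sol.sup' (hne sol hsol) (fun p => ∑ i ∈ p, ζ i), sol, hsol,
      fun p hp => Finset.le_sup' (fun q => ∑ i ∈ q, ζ i) hp⟩
  have hBbdd : BddBelow B := by
    refine ⟨0, fun M hM => ?_⟩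
    obtain ⟨sol, hsol, h⟩ := hM
    obtain ⟨p, hp⟩ := hne sol hsol
    refine le_trans ?_ (h p hp)
    have : (0:ℤ) ≤ ∑ i ∈ p, (⌊θ * ζ i⌋ + 1) := by
      apply Finset.sum_nonneg
      intro i _
      have : (0:ℝ) ≤ θ * ζ i := le_of_lt (mul_pos hθpos (hζ i))
      have := Int.floor_nonneg.2 this
      omega
    exact_mod_cast this
  have key : ∀ M ∈ A, sInf B ≤ θ * M + m := by
    intro M hM
    obtain ⟨sol, hsol, hbound⟩ := hM
    apply csInf_le hBbdd
    refine ⟨sol, hsol, fun p hp => ?_⟩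
    have h1 : ((∑ i ∈ p, (⌊θ * ζ i⌋ + 1) : ℤ) : ℝ) ≤ θ * (∑ i ∈ p, ζ i) + p.card := by
      push_cast
      rw [Finset.sum_add_distrib, Finset.mul_sum, Finset.sum_const, nsmul_eq_mul, mul_one]
      gcongr with i hi
      exact Int.floor_le _
    calc ((∑ i ∈ p, (⌊θ * ζ i⌋ + 1) : ℤ) : ℝ)
        ≤ θ * (∑ i ∈ p, ζ i) + p.card := h1
      _ ≤ θ * M + m := by
          gcongr
          · exact hbound p hp
          · exact_mod_cast hcard sol hsol p hp
  have hstep : sInf B ≤ θ * sInf A + m := by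
    have h1 : (sInf B - m) / θ ≤ sInf A := by
      apply le_csInf hAne
      intro M hM
      rw [div_le_iff₀ hθpos, mul_comm]
      linarith [key M hM]
    have := (div_le_iff₀ hθpos).1 h1
    linarith [mul_le_mul_of_nonneg_left h1 (le_of_lt hθpos)]
  have hεLB : ε * LB ≠ 0 := by positivity
  have hθm : θ * (ε * LB) = m := by rw [hθ]; field_simp
  have hZpos : LB ≤ sInf A := hlow
  have : (m : ℝ) ≤ θ * ε * sInf A := by
    calc (m:ℝ) = θ * (ε * LB) := hθm.symm
      _ = θ * ε * LB := by ring
      _ ≤ θ * ε * sInf A := by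
          apply mul_le_mul_of_nonneg_left hZpos
          positivity
  calc sInf B ≤ θ * sInf A + m := hstep
    _ ≤ θ * sInf A + θ * ε * sInf A := by linarith
    _ = θ * (1 + ε) * sInf A := by ring
end

section
/- If the output of the two-stage bisection is a feasible solution whose maximum quantized path length Z⁺ satisfies Z⁺ ≤ **Z**^θ (by optimality of bisection on integers), then its maximum real path length **Z**⁺ satisfies **Z**⁺ ≤ Z⁺/θ ≤ (1+ε)·**Z***, i.e., the algorithm is a (1+ε)-approximation. -/
/-- (1+ε)-approximation of the two-stage bisection: if the output is a feasible
solution whose maximum quantized path length `Z⁺` satisfies `Z⁺ ≤ Z^θ`, then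
every real path length is at most `Z⁺/θ`, and `Z⁺/θ ≤ (1+ε)·Z*`. -/
theorem bisection_approximation {ι : Type*} (ζ : ι → ℝ) (hζ : ∀ i, 0 < ζ i)
    (m : ℕ) (hm : 1 ≤ m)
    (S : Set (Finset (Finset ι))) (hS : S.Nonempty)
    (hne : ∀ sol ∈ S, sol.Nonempty)
    (hcard : ∀ sol ∈ S, ∀ p ∈ sol, p.card ≤ m)
    (LB ε : ℝ) (hLB : 0 < LB) (hε : 0 < ε)
    (θ : ℝ) (hθ : θ = m / (ε * LB))
    (hlow : LB ≤ sInf {M : ℝ | ∃ sol ∈ S, ∀ p ∈ sol, ∑ i ∈ p, ζ i ≤ M})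
    (sol : Finset (Finset ι)) (hsol : sol ∈ S) (Zplus : ℤ)
    (hmax : ∀ p ∈ sol, (∑ i ∈ p, (⌊θ * ζ i⌋ + 1) : ℤ) ≤ Zplus)
    (hopt : (Zplus : ℝ) ≤
      sInf {M : ℝ | ∃ s ∈ S, ∀ p ∈ s, ((∑ i ∈ p, (⌊θ * ζ i⌋ + 1) : ℤ) : ℝ) ≤ M}) :
    (∀ p ∈ sol, ∑ i ∈ p, ζ i ≤ (Zplus : ℝ) / θ) ∧
    (Zplus : ℝ) / θ ≤ (1 + ε) * sInf {M : ℝ | ∃ s ∈ S, ∀ p ∈ s, ∑ i ∈ p, ζ i ≤ M} := by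
  have hεLB : 0 < ε * LB := mul_pos hε hLB
  have hmpos : (0:ℝ) < (m:ℝ) := by exact_mod_cast Nat.lt_of_lt_of_le Nat.zero_lt_one hm
  have hθpos : 0 < θ := by rw [hθ]; positivity
  have hθm : θ * (ε * LB) = m := by rw [hθ]; field_simp
  set Zstar := sInf {M : ℝ | ∃ s ∈ S, ∀ p ∈ s, ∑ i ∈ p, ζ i ≤ M} with hZstar
  -- key pointwise bound: θ * ζ i ≤ ⌊θ * ζ i⌋ + 1
  have hkey : ∀ i, θ * ζ i ≤ (⌊θ * ζ i⌋ : ℝ) + 1 :=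
    fun i => (Int.lt_floor_add_one _).le
  -- Part 1
  have part1 : ∀ p ∈ sol, ∑ i ∈ p, ζ i ≤ (Zplus : ℝ) / θ := by
    intro p hp
    rw [le_div_iff₀ hθpos]
    calc (∑ i ∈ p, ζ i) * θ = ∑ i ∈ p, θ * ζ i := by
          rw [Finset.sum_mul]; exact Finset.sum_congr rfl fun i _ => mul_comm _ _
      _ ≤ ∑ i ∈ p, ((⌊θ * ζ i⌋ : ℝ) + 1) := Finset.sum_le_sum fun i _ => hkey i
      _ = ((∑ i ∈ p, (⌊θ * ζ i⌋ + 1) : ℤ) : ℝ) := by push_cast; ring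
      _ ≤ (Zplus : ℝ) := by exact_mod_cast hmax p hp
  refine ⟨part1, ?_⟩
  -- nonemptiness of the real set
  obtain ⟨s0, hs0⟩ := hS
  have hRne : {M : ℝ | ∃ s ∈ S, ∀ p ∈ s, ∑ i ∈ p, ζ i ≤ M}.Nonempty := by
    refine ⟨∑ q ∈ s0, ∑ i ∈ q, ζ i, s0, hs0, fun p hp => ?_⟩
    exact Finset.single_le_sum (f := fun q => ∑ i ∈ q, ζ i) (fun q _ => Finset.sum_nonneg fun i _ => (hζ i).le) hp
  -- quantized set is bounded below by 0
  have hQbdd : BddBelow {M : ℝ | ∃ s ∈ S, ∀ p ∈ s, ((∑ i ∈ p, (⌊θ * ζ i⌋ + 1) : ℤ) : ℝ) ≤ M} := by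
    refine ⟨0, fun M hM => ?_⟩
    obtain ⟨s, hsS, hs⟩ := hM
    obtain ⟨p, hp⟩ := hne s hsS
    refine le_trans ?_ (hs p hp)
    push_cast
    refine Finset.sum_nonneg fun i _ => ?_
    have : (0:ℝ) ≤ (⌊θ * ζ i⌋ : ℝ) := by
      exact_mod_cast Int.floor_nonneg.mpr (mul_pos hθpos (hζ i)).le
    linarith
  -- for every M in the real set, Zplus ≤ θ*M + m
  have hbound : ∀ M ∈ {M : ℝ | ∃ s ∈ S, ∀ p ∈ s, ∑ i ∈ p, ζ i ≤ M},
      (Zplus : ℝ) ≤ θ * M + m := by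
    rintro M ⟨s, hsS, hs⟩
    have hmem : θ * M + m ∈
        {M : ℝ | ∃ s ∈ S, ∀ p ∈ s, ((∑ i ∈ p, (⌊θ * ζ i⌋ + 1) : ℤ) : ℝ) ≤ M} := by
      refine ⟨s, hsS, fun p hp => ?_⟩
      have h1 : ((∑ i ∈ p, (⌊θ * ζ i⌋ + 1) : ℤ) : ℝ)
          = ∑ i ∈ p, ((⌊θ * ζ i⌋ : ℝ) + 1) := by push_cast; ring
      rw [h1]
      have h2 : ∑ i ∈ p, ((⌊θ * ζ i⌋ : ℝ) + 1) ≤ ∑ i ∈ p, (θ * ζ i + 1) :=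
        Finset.sum_le_sum fun i _ => by have := Int.floor_le (θ * ζ i); linarith
      have h3 : ∑ i ∈ p, (θ * ζ i + 1) = θ * (∑ i ∈ p, ζ i) + p.card := by
        rw [Finset.sum_add_distrib, Finset.mul_sum, Finset.sum_const, nsmul_eq_mul, mul_one]
      have h4 : (p.card : ℝ) ≤ m := by exact_mod_cast hcard s hsS p hp
      have h5 : θ * (∑ i ∈ p, ζ i) ≤ θ * M :=
        mul_le_mul_of_nonneg_left (hs p hp) hθpos.le
      linarith
    exact hopt.trans (csInf_le hQbdd hmem)
  -- hence (Zplus - m)/θ ≤ Zstar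
  have hlb : ((Zplus : ℝ) - m) / θ ≤ Zstar := by
    refine le_csInf hRne fun M hM => ?_
    rw [div_le_iff₀ hθpos]
    have := hbound M hM
    nlinarith
  -- conclude
  have hLBZ : LB ≤ Zstar := hlow
  have hmθ : (m : ℝ) / θ = ε * LB := by
    rw [eq_comm, eq_div_iff hθpos.ne']; linarith [hθm]
  have : (Zplus : ℝ) / θ = ((Zplus : ℝ) - m) / θ + (m : ℝ) / θ := by ring
  rw [this, hmθ]
  have : ε * LB ≤ ε * Zstar := mul_le_mul_of_nonneg_left hLBZ hε.le
  linarith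
end
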